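/- Let Φ be proper convex lsc, B β-cocoercive, μ = 1/λ, and (x, v) a strong solution of v(t) ∈ ∂Φ(x(t)), λẋ(t) + v̇(t) + v(t) + B(x(t)) = 0. For z with 0 ∈ ∂Φ(z) + Bz, define Γ_z(t) = (1/2)‖x(t) − z‖² + μ[Φ(z) − Φ(x(t)) − ⟨z − x(t), v(t)⟩]. Then Γ_z is nonnegative and (d/dt)Γ_z(t) + μβ‖B(x(t)) − Bz‖² ≤ 0 for almost all t; in particular Γ_z is nonincreasing. -/

import Mathlib

open scoped RealInnerProductSpace
open MeasureTheory Filter Set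
open scoped Topology
open Asymptotics

/-- `v` belongs to the convex subdifferential of `Φ` at `x`. -/
def InSubdiff {H : Type*} [NormedAddCommGroup H] [InnerProductSpace ℝ H]
    (Φ : H → EReal) (x v : H) : Prop :=
  ∀ y : H, Φ x + ((⟪v, y - x⟫ : ℝ) : EReal) ≤ Φ y

/-- Locally absolutely continuous on `[0, ∞)` with a.e. derivative `x'`. -/
def IsLocAC {H : Type*} [NormedAddCommGroup H] [NormedSpace ℝ H]
    (x x' : ℝ → H) : Prop :=
  (∀ a b : ℝ, 0 ≤ a → 0 ≤ b → IntegrableOn x' (Set.uIcc a b)) ∧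
    ∀ s t : ℝ, 0 ≤ s → 0 ≤ t → x t - x s = ∫ u in s..t, x' u

/-- The Bregman-type function `Γ_z` is a nonnegative Lyapunov function for the
regularized Newton dynamic: `Γ_z' + μβ‖B(x) - Bz‖² ≤ 0` a.e., and `Γ_z` is
nonincreasing. -/
theorem lyapunov_newton
    {H : Type*} [NormedAddCommGroup H] [InnerProductSpace ℝ H] [CompleteSpace H]
    (Φ : H → EReal)
    (hproper : (∀ x, Φ x ≠ ⊥) ∧ ∃ x, Φ x ≠ ⊤)
    (hconvex : ∀ x y : H, ∀ a b : ℝ, 0 ≤ a → 0 ≤ b → a + b = 1 →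
      Φ (a • x + b • y) ≤ (a : EReal) * Φ x + (b : EReal) * Φ y)
    (hlsc : LowerSemicontinuous Φ)
    (β : ℝ) (hβ : 0 < β) (B : H → H)
    (hcoco : ∀ x y : H, β * ‖B x - B y‖ ^ 2 ≤ ⟪B x - B y, x - y⟫)
    (lam μ : ℝ) (hlam : 0 < lam) (hμ : μ = 1 / lam)
    (x v x' v' : ℝ → H)
    (hx : IsLocAC x x') (hv : IsLocAC v v')
    (hsub : ∀ t : ℝ, 0 ≤ t → InSubdiff Φ (x t) (v t))
    (heq : ∀ᵐ t ∂(volume.restrict (Ioi (0 : ℝ))),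
      lam • x' t + v' t + v t + B (x t) = 0)
    (z : H) (hz : InSubdiff Φ z (-B z))
    (Γ : ℝ → ℝ)
    (hΓ : ∀ t : ℝ, Γ t = (1 / 2) * ‖x t - z‖ ^ 2 +
      μ * ((Φ z).toReal - (Φ (x t)).toReal - ⟪z - x t, v t⟫)) :
    (∀ t : ℝ, 0 ≤ t → 0 ≤ Γ t) ∧
      (∃ g : ℝ → ℝ,
        (∀ᵐ t ∂(volume.restrict (Ioi (0 : ℝ))),
          HasDerivAt Γ (g t) t ∧ g t + μ * β * ‖B (x t) - B z‖ ^ 2 ≤ 0) ∧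
        AntitoneOn Γ (Ici (0 : ℝ))) := by
  have hμpos : 0 < μ := by rw [hμ]; positivity
  have hμlam : μ * lam = 1 := by rw [hμ]; field_simp
  -- finiteness of Φ at subdifferentiability points
  have hfin : ∀ p u : H, InSubdiff Φ p u → Φ p = ((Φ p).toReal : EReal) := by
    intro p u hpu
    refine (EReal.coe_toReal ?_ (hproper.1 p)).symm
    intro htop
    obtain ⟨y0, hy0⟩ := hproper.2
    have h1 := hpu y0
    rw [htop, EReal.top_add_coe] at h1
    exact hy0 (top_le_iff.1 h1)
  -- real form of the subdifferential inequality
  have hreal : ∀ p u q w : H, InSubdiff Φ p u → InSubdiff Φ q w →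
      (Φ p).toReal + ⟪u, q - p⟫ ≤ (Φ q).toReal := by
    intro p u q w hpu hqw
    have h1 := hpu q
    rw [hfin p u hpu, hfin q w hqw, ← EReal.coe_add, EReal.coe_le_coe_iff] at h1
    exact h1
  -- Part 1 : nonnegativity
  have part1 : ∀ t : ℝ, 0 ≤ t → 0 ≤ Γ t := by
    intro t ht
    have h1 := hreal (x t) (v t) z (-B z) (hsub t ht) hz
    have h2 : ⟪z - x t, v t⟫ = ⟪v t, z - x t⟫ := real_inner_comm _ _
    have h3 : 0 ≤ μ * ((Φ z).toReal - (Φ (x t)).toReal - ⟪z - x t, v t⟫) := by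
      apply mul_nonneg hμpos.le; linarith
    rw [hΓ t]
    nlinarith [sq_nonneg ‖x t - z‖]
  -- Lipschitz continuity of B
  have hBlip : ∀ a b : H, ‖B a - B b‖ ≤ (1 / β) * ‖a - b‖ := by
    intro a b
    rcases eq_or_lt_of_le (norm_nonneg (B a - B b)) with h | h
    · rw [← h]; positivity
    · have h1 := hcoco a b
      have h2 := real_inner_le_norm (B a - B b) (a - b)
      have h3 : β * ‖B a - B b‖ ^ 2 ≤ ‖B a - B b‖ * ‖a - b‖ := le_trans h1 h2
      rw [div_mul_eq_mul_div, le_div_iff₀ hβ]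
      nlinarith
  have hBcont : Continuous B := by
    refine (LipschitzWith.of_dist_le_mul (K := Real.toNNReal (1 / β)) ?_).continuous
    intro a b
    rw [dist_eq_norm, dist_eq_norm, Real.coe_toNNReal _ (by positivity)]
    exact hBlip a b
  -- continuity of x and v on [0, ∞)
  have hcont_primitive : ∀ (y y' : ℝ → H), IsLocAC y y' → ContinuousOn y (Ici (0:ℝ)) := by
    intro y y' hy
    set Y : ℝ → H := (Ici (0:ℝ)).indicator y' with hY
    have hYint : ∀ a b : ℝ, IntervalIntegrable Y volume a b := by
      intro a b
      rw [intervalIntegrable_iff]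
      rw [hY, IntegrableOn, integrable_indicator_iff measurableSet_Ici, IntegrableOn,
        Measure.restrict_restrict measurableSet_Ici]
      have hsub : Set.uIoc a b ∩ Ici 0 ⊆ uIcc (0:ℝ) (|a| ⊔ |b|) := by
        intro u hu
        rcases hu with ⟨hu1, hu2⟩
        have hub : u ≤ a ⊔ b := (Set.uIoc_subset_uIcc hu1).2
        rw [uIcc_of_le (by positivity)]
        exact ⟨hu2, le_trans hub (sup_le ((le_abs_self a).trans le_sup_left)
          ((le_abs_self b).trans le_sup_right))⟩
      exact (hy.1 0 (|a| ⊔ |b|) le_rfl (by positivity)).mono_set (by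
        intro u hu; exact hsub (by rwa [Set.inter_comm] at hu))
    have hYcont : Continuous fun t => ∫ u in (0:ℝ)..t, Y u :=
      intervalIntegral.continuous_primitive hYint 0
    have hEq : Set.EqOn y (fun t => y 0 + ∫ u in (0:ℝ)..t, Y u) (Ici 0) := by
      intro t ht
      show y t = y 0 + ∫ u in (0:ℝ)..t, Y u
      have h1 := hy.2 0 t le_rfl ht
      have h2 : ∫ u in (0:ℝ)..t, Y u = ∫ u in (0:ℝ)..t, y' u := by
        apply intervalIntegral.integral_congr
        intro u hu
        rw [uIcc_of_le ht] at hu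
        exact Set.indicator_of_mem (hu.1 : (0:ℝ) ≤ u) y'
      rw [h2, ← h1]; abel
    exact (ContinuousOn.congr ((continuous_const.add hYcont).continuousOn) hEq)
  have hxc : ContinuousOn x (Ici (0:ℝ)) := hcont_primitive x x' hx
  have hvc : ContinuousOn v (Ici (0:ℝ)) := hcont_primitive v v' hv
  -- the everywhere-differentiable combination W = lam • x + v
  obtain ⟨W, hWcont, hWd, hWeq⟩ :
      ∃ W : ℝ → H, Continuous W ∧
        (∀ t : ℝ, 0 < t → HasDerivAt W (-(v t + B (x t))) t) ∧
        (∀ t : ℝ, 0 ≤ t → W t = lam • x t + v t) := by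
    set F : ℝ → H := fun u => v (u ⊔ 0) + B (x (u ⊔ 0)) with hF
    have hmax : Continuous fun u : ℝ => u ⊔ 0 := continuous_id.max continuous_const
    have hmem : ∀ u : ℝ, u ⊔ 0 ∈ Ici (0:ℝ) := fun u => le_max_right u 0
    have hFcont : Continuous F :=
      (hvc.comp_continuous hmax hmem).add
        (hBcont.comp (hxc.comp_continuous hmax hmem))
    refine ⟨fun t => (lam • x 0 + v 0) - ∫ u in (0:ℝ)..t, F u, ?_, ?_, ?_⟩
    · have : Continuous fun t => ∫ u in (0:ℝ)..t, F u :=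
        intervalIntegral.continuous_primitive (fun a b => hFcont.intervalIntegrable a b) 0
      exact continuous_const.sub this
    · intro t ht
      have h0 := ((hFcont.integral_hasStrictDerivAt 0 t).hasDerivAt).const_sub
        (lam • x 0 + v 0)
      have hFt : F t = v t + B (x t) := by rw [hF]; simp [max_eq_left ht.le]
      rwa [hFt] at h0
    · intro t ht
      have hxint : IntervalIntegrable x' volume 0 t := by
        rw [intervalIntegrable_iff]
        exact (hx.1 0 t le_rfl ht).mono_set Set.uIoc_subset_uIcc
      have hvint : IntervalIntegrable v' volume 0 t := by
        rw [intervalIntegrable_iff]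
        exact (hv.1 0 t le_rfl ht).mono_set Set.uIoc_subset_uIcc
      have h1 : x t - x 0 = ∫ u in (0:ℝ)..t, x' u := hx.2 0 t le_rfl ht
      have h2 : v t - v 0 = ∫ u in (0:ℝ)..t, v' u := hv.2 0 t le_rfl ht
      have h3 : ∫ u in (0:ℝ)..t, (lam • x' u + v' u) =
          lam • (x t - x 0) + (v t - v 0) := by
        rw [h1, h2, ← intervalIntegral.integral_smul]
        exact intervalIntegral.integral_add (hxint.smul lam) hvint
      have h4 : ∫ u in (0:ℝ)..t, (lam • x' u + v' u) = ∫ u in (0:ℝ)..t, (-(F u)) := by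
        apply intervalIntegral.integral_congr_ae
        have heq' : ∀ᵐ u ∂volume, u ∈ Ioi (0:ℝ) →
            lam • x' u + v' u + v u + B (x u) = 0 :=
          (ae_restrict_iff' measurableSet_Ioi).1 heq
        filter_upwards [heq'] with u hu hu2
        rw [Set.uIoc_of_le ht] at hu2
        have hu0 : 0 < u := hu2.1
        have h5 := hu hu0
        have hFu : F u = v u + B (x u) := by
          rw [hF]; simp [max_eq_left hu0.le]
        rw [hFu]
        have : lam • x' u + v' u = -(v u + B (x u)) := by
          rw [eq_neg_iff_add_eq_zero, ← h5]; abel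
        exact this
      show lam • x 0 + v 0 - (∫ u in (0:ℝ)..t, F u) = lam • x t + v t
      rw [intervalIntegral.integral_neg] at h4
      have h5 : ∫ u in (0:ℝ)..t, F u = -(lam • (x t - x 0) + (v t - v 0)) := by
        rw [← h3, h4, neg_neg]
      rw [h5, smul_sub]
      abel
  -- the key incremental inequality
  have hkey : ∀ s : ℝ, 0 ≤ s → ∀ t : ℝ, 0 ≤ t →
      Γ s - Γ t ≤ μ * ⟪x s - z, W s - W t⟫ := by
    intro s hs t ht
    have hh := hreal (x t) (v t) (x s) (v s) (hsub t ht) (hsub s hs)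
    rw [hΓ s, hΓ t, hWeq s hs, hWeq t ht]
    have e1 : lam • x s + v s - (lam • x t + v t) = lam • (x s - x t) + (v s - v t) := by
      rw [smul_sub]; abel
    rw [e1]
    have f6 : (⟪x s - z, v s - v t⟫ : ℝ) = ⟪x s - z, v s⟫ - ⟪x s - z, v t⟫ :=
      inner_sub_right _ _ _
    have f1' : μ * ⟪x s - z, lam • (x s - x t) + (v s - v t)⟫ =
        ⟪x s - z, x s - x t⟫ + μ * ⟪x s - z, v s⟫ - μ * ⟪x s - z, v t⟫ := by
      rw [inner_add_right, real_inner_smul_right, f6]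
      linear_combination (⟪x s - z, x s - x t⟫ : ℝ) * hμlam
    have f2 : ‖x t - z‖ ^ 2 =
        ‖x s - z‖ ^ 2 - 2 * ⟪x s - z, x s - x t⟫ + ‖x s - x t‖ ^ 2 := by
      have e : x t - z = (x s - z) - (x s - x t) := by abel
      rw [e, @norm_sub_sq_real]
    have f3 : ⟪z - x s, v s⟫ = -⟪x s - z, v s⟫ := by
      have e : z - x s = -(x s - z) := by abel
      rw [e, inner_neg_left]
    have f4 : ⟪z - x t, v t⟫ = -⟪x s - z, v t⟫ + ⟪x s - x t, v t⟫ := by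
      have e : z - x t = -(x s - z) + (x s - x t) := by abel
      rw [e, inner_add_left, inner_neg_left]
    have f5 : (Φ (x t)).toReal + ⟪x s - x t, v t⟫ ≤ (Φ (x s)).toReal := by
      have e : ⟪v t, x s - x t⟫ = ⟪x s - x t, v t⟫ := real_inner_comm _ _
      linarith [hh, e.symm.le, e.le]
    have hmul : 0 ≤ μ * ((Φ (x s)).toReal - ((Φ (x t)).toReal + ⟪x s - x t, v t⟫)) :=
      mul_nonneg hμpos.le (by linarith)
    nlinarith [sq_nonneg ‖x s - x t‖]
  -- the derivative candidate
  set g : ℝ → ℝ := fun t => -(μ * ⟪x t - z, v t + B (x t)⟫) with hg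
  -- derivative everywhere on (0, ∞)
  have hderiv : ∀ t : ℝ, 0 < t → HasDerivAt Γ (g t) t := by
    intro t ht
    have hIci : Ici (0:ℝ) ∈ 𝓝 t := Ici_mem_nhds ht
    have hxt : ContinuousAt x t := hxc.continuousAt hIci
    have hW't : HasDerivAt W (-(v t + B (x t))) t := hWd t ht
    set φ : ℝ → ℝ := fun s => μ * ⟪x t - z, W s⟫ with hφ
    have hφd : HasDerivAt φ (μ * ⟪x t - z, -(v t + B (x t))⟫) t := by
      have h1 : HasDerivAt (fun s => ⟪x t - z, W s⟫) (⟪x t - z, -(v t + B (x t))⟫) t := by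
        have := (hasDerivAt_const t (x t - z)).inner ℝ hW't
        simpa using this
      exact h1.const_mul μ
    -- the difference Γ - φ has derivative 0 at t
    have hdiff : HasDerivAt (fun s => Γ s - φ s) 0 t := by
      rw [hasDerivAt_iff_isLittleO]
      simp only [smul_zero, sub_zero]
      have hbd : ∀ᶠ s in 𝓝 t, ‖Γ s - φ s - (Γ t - φ t)‖ ≤
          1 * ‖μ * ‖x s - x t‖ * ‖W s - W t‖‖ := by
        filter_upwards [hIci] with s hs
        have h1 := hkey s hs t ht.le
        have h2 := hkey t ht.le s hs
        have e1 : φ s - φ t = μ * ⟪x t - z, W s - W t⟫ := by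
          rw [hφ]; rw [← mul_sub, ← inner_sub_right]
        have e2 : μ * ⟪x s - z, W s - W t⟫ - μ * ⟪x t - z, W s - W t⟫ =
            μ * ⟪x s - x t, W s - W t⟫ := by
          rw [← mul_sub, ← inner_sub_left]
          congr 2
          abel
        have e3 : μ * ⟪x t - z, W t - W s⟫ = -(μ * ⟪x t - z, W s - W t⟫) := by
          have e : W t - W s = -(W s - W t) := by abel
          rw [e, inner_neg_right]; ring
        have hub : Γ s - φ s - (Γ t - φ t) ≤ μ * ⟪x s - x t, W s - W t⟫ := by
          linarith [h1, e1, e2]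
        have hlb : 0 ≤ Γ s - φ s - (Γ t - φ t) := by
          linarith [h2, e1, e3]
        have hcs : μ * ⟪x s - x t, W s - W t⟫ ≤ μ * ‖x s - x t‖ * ‖W s - W t‖ := by
          have := real_inner_le_norm (x s - x t) (W s - W t)
          nlinarith
        rw [Real.norm_eq_abs, Real.norm_eq_abs, one_mul,
          abs_of_nonneg hlb, abs_of_nonneg (by positivity)]
        linarith
      have hO : (fun s => Γ s - φ s - (Γ t - φ t)) =O[𝓝 t]
          fun s => μ * ‖x s - x t‖ * ‖W s - W t‖ :=
        Asymptotics.IsBigO.of_bound 1 hbd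
      refine hO.trans_isLittleO ?_
      have hA : (fun s => μ * ‖x s - x t‖) =o[𝓝 t] (fun _ => (1:ℝ)) := by
        rw [Asymptotics.isLittleO_one_iff]
        have h0 : Tendsto (fun s => x s - x t) (𝓝 t) (𝓝 (x t - x t)) :=
          hxt.tendsto.sub tendsto_const_nhds
        have : Tendsto (fun s => x s - x t) (𝓝 t) (𝓝 0) := by
          simpa using h0
        simpa using (this.norm.const_mul μ)
      have hB : (fun s => ‖W s - W t‖) =O[𝓝 t] fun s => s - t :=
        hW't.isBigO_sub.norm_left
      have := hA.mul_isBigO hB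
      simpa using this
    have hsum := hdiff.add hφd
    have e4 : ((fun s => Γ s - φ s) + φ) = Γ := by ext s; simp only [Pi.add_apply]; ring
    rw [e4] at hsum
    have e5 : 0 + μ * ⟪x t - z, -(v t + B (x t))⟫ = g t := by
      show _ = -(μ * ⟪x t - z, v t + B (x t)⟫)
      rw [inner_neg_right]; ring
    rwa [e5] at hsum
  -- the pointwise bound on g
  have hgle : ∀ t : ℝ, 0 ≤ t → g t + μ * β * ‖B (x t) - B z‖ ^ 2 ≤ 0 := by
    intro t ht
    have h1 := hreal (x t) (v t) z (-B z) (hsub t ht) hz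
    have h2 := hreal z (-B z) (x t) (v t) hz (hsub t ht)
    have hmono : 0 ≤ ⟪x t - z, v t + B z⟫ := by
      have e1 : ⟪v t, z - x t⟫ = -⟪x t - z, v t⟫ := by
        rw [real_inner_comm]
        have e : z - x t = -(x t - z) := by abel
        rw [e, inner_neg_left]
      have e2 : ⟪-B z, x t - z⟫ = -⟪x t - z, B z⟫ := by
        rw [inner_neg_left, real_inner_comm]
      have e3 : ⟪x t - z, v t + B z⟫ = ⟪x t - z, v t⟫ + ⟪x t - z, B z⟫ :=
        inner_add_right _ _ _
      linarith
    have hco := hcoco (x t) z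
    have e : ⟪x t - z, v t + B (x t)⟫ =
        ⟪x t - z, v t + B z⟫ + ⟪B (x t) - B z, x t - z⟫ := by
      have eadd : v t + B (x t) = v t + B z + (B (x t) - B z) := by abel
      rw [eadd, inner_add_right, real_inner_comm (x t - z) (B (x t) - B z)]
    have e' : μ * ⟪x t - z, v t + B (x t)⟫ =
        μ * ⟪x t - z, v t + B z⟫ + μ * ⟪B (x t) - B z, x t - z⟫ := by
      rw [e]; ring
    show -(μ * ⟪x t - z, v t + B (x t)⟫) + μ * β * ‖B (x t) - B z‖ ^ 2 ≤ 0
    have hcm := mul_le_mul_of_nonneg_left hco hμpos.le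
    have hmm := mul_nonneg hμpos.le hmono
    linarith [e', hcm, hmm]
  -- continuity of Γ on [0, ∞)
  have hΓcont : ContinuousOn Γ (Ici (0:ℝ)) := by
    intro t ht
    have hbound : ∀ s ∈ Ici (0:ℝ), |Γ s - Γ t| ≤
        μ * ((‖x s - z‖ + ‖x t - z‖) * ‖W s - W t‖) := by
      intro s hs
      have h1 := hkey s hs t ht
      have h2 := hkey t ht s hs
      have c1 : ⟪x s - z, W s - W t⟫ ≤ ‖x s - z‖ * ‖W s - W t‖ :=
        real_inner_le_norm _ _
      have c2 : ⟪x t - z, W t - W s⟫ ≤ ‖x t - z‖ * ‖W s - W t‖ := by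
        have := real_inner_le_norm (x t - z) (W t - W s)
        rwa [norm_sub_rev (W t)] at this
      have d1 := mul_le_mul_of_nonneg_left c1 hμpos.le
      have d2 := mul_le_mul_of_nonneg_left c2 hμpos.le
      have d3 := mul_nonneg hμpos.le
        (mul_nonneg (norm_nonneg (x t - z)) (norm_nonneg (W s - W t)))
      have d4 := mul_nonneg hμpos.le
        (mul_nonneg (norm_nonneg (x s - z)) (norm_nonneg (W s - W t)))
      rw [abs_sub_le_iff]
      constructor
      · linarith [h1, d1, d3]
      · linarith [h2, d2, d4]
    have htend : Tendsto (fun s => μ * ((‖x s - z‖ + ‖x t - z‖) * ‖W s - W t‖))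
        (𝓝[Ici 0] t) (𝓝 0) := by
      have hx0 : Tendsto (fun s => ‖x s - z‖ + ‖x t - z‖) (𝓝[Ici 0] t)
          (𝓝 (‖x t - z‖ + ‖x t - z‖)) := by
        exact (((hxc t ht).sub tendsto_const_nhds).norm.add tendsto_const_nhds)
      have hw0 : Tendsto (fun s => ‖W s - W t‖) (𝓝[Ici 0] t) (𝓝 0) := by
        have : Tendsto (fun s => W s - W t) (𝓝[Ici 0] t) (𝓝 0) := by
          have := (hWcont.continuousAt (x := t)).tendsto.sub
            (tendsto_const_nhds (x := W t))
          simpa using this.mono_left nhdsWithin_le_nhds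
        simpa using this.norm
      have := (hx0.mul hw0).const_mul μ
      simpa using this
    have hsubt : Tendsto (fun s => Γ s - Γ t) (𝓝[Ici 0] t) (𝓝 0) := by
      refine squeeze_zero_norm' ?_ htend
      filter_upwards [self_mem_nhdsWithin] with s hs
      simpa [Real.norm_eq_abs] using hbound s hs
    have : Tendsto Γ (𝓝[Ici 0] t) (𝓝 (Γ t)) := by
      have := hsubt.add (tendsto_const_nhds (x := Γ t))
      simpa using this
    exact this
  -- assembling the antitonicity
  have hanti : AntitoneOn Γ (Ici (0:ℝ)) := by
    apply antitoneOn_of_deriv_nonpos (convex_Ici 0) hΓcont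
    · intro s hs
      rw [interior_Ici] at hs
      exact (hderiv s hs).differentiableAt.differentiableWithinAt
    · intro s hs
      rw [interior_Ici] at hs
      rw [(hderiv s hs).deriv]
      have := hgle s hs.le
      nlinarith [sq_nonneg ‖B (x s) - B z‖, mul_nonneg (mul_nonneg hμpos.le hβ.le) (sq_nonneg ‖B (x s) - B z‖)]
  refine ⟨part1, g, ?_, hanti⟩
  rw [ae_restrict_iff' measurableSet_Ioi]
  filter_upwards with t ht
  exact ⟨hderiv t ht, hgle t ht.le⟩
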